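/- Multi-pumping preserves the 1-split property at each position: let φ : Γ* → M be a morphism and s = α₀ β₁ α₁ ⋯ β_l α_l a factorization such that for each m < l the triple (α₀ β₁ ⋯ α_m, β_{m+1}, α_{m+1} β_{m+2} ⋯ α_l) is a 1-split according to φ. Then for any exponents n₁, …, n_l ∈ ℕ and any m < l, the triple (α₀ β₁^{n₁} ⋯ α_m β_{m+1}^{n_{m+1}}, β_{m+1}, α_{m+1} β_{m+2}^{n_{m+2}} ⋯ α_l) is also a 1-split according to φ. -/

import Mathlib

/-- `v` raised to the `n`-th power as a word. -/
def wpow {Γ : Type*} (n : ℕ) (v : List Γ) : List Γ := (List.replicate n v).flatten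

/-- The prefix `α₀ β₀^{n₀} α₁ ⋯ β_{m-1}^{n_{m-1}} α_m` of the pumped factorization. -/
def preW {Γ : Type*} (α β : ℕ → List Γ) (n : ℕ → ℕ) (m : ℕ) : List Γ :=
  α 0 ++ ((List.range m).map (fun j => wpow (n j) (β j) ++ α (j+1))).flatten

/-- The suffix `α_m β_m^{n_m} α_{m+1} ⋯ α_l` of the pumped factorization. -/
def sfxW {Γ : Type*} (α β : ℕ → List Γ) (n : ℕ → ℕ) (l m : ℕ) : List Γ :=
  α m ++ ((List.range (l - m)).map (fun j => wpow (n (m+j)) (β (m+j)) ++ α (m+j+1))).flatten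

lemma wpow_succ {Γ : Type*} (k : ℕ) (v : List Γ) : wpow (k+1) v = v ++ wpow k v := by
  simp [wpow, List.replicate_succ]

lemma pump_right {Γ M : Type*} [Monoid M] (φ : List Γ → M)
    (hφ : ∀ x y : List Γ, φ (x ++ y) = φ x * φ y)
    {x v : List Γ} (h : φ (x ++ v) = φ x) : ∀ k, φ (x ++ wpow k v) = φ x := by
  intro k
  induction k generalizing x with
  | zero => simp [wpow]
  | succ k ih =>
    have h2 : φ ((x ++ v) ++ v) = φ (x ++ v) := by
      rw [hφ (x ++ v) v, h, ← hφ]; exact h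
    rw [wpow_succ, ← List.append_assoc, ih h2, h]

lemma pump_left {Γ M : Type*} [Monoid M] (φ : List Γ → M)
    (hφ : ∀ x y : List Γ, φ (x ++ y) = φ x * φ y)
    {v w : List Γ} (h : φ (v ++ w) = φ w) : ∀ k, φ (wpow k v ++ w) = φ w := by
  intro k
  induction k with
  | zero => simp [wpow]
  | succ k ih =>
    rw [wpow_succ, List.append_assoc, hφ, ih, ← hφ, h]

lemma preW_succ {Γ : Type*} (α β : ℕ → List Γ) (n : ℕ → ℕ) (m : ℕ) :
    preW α β n (m+1) = (preW α β n m ++ wpow (n m) (β m)) ++ α (m+1) := by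
  simp [preW, List.range_succ]

lemma sfxW_last {Γ : Type*} (α β : ℕ → List Γ) (n : ℕ → ℕ) (l : ℕ) :
    sfxW α β n l l = α l := by
  simp [sfxW]

lemma sfxW_succ {Γ : Type*} (α β : ℕ → List Γ) (n : ℕ → ℕ) {l m : ℕ} (hm : m < l) :
    sfxW α β n l m = α m ++ (wpow (n m) (β m) ++ sfxW α β n l (m+1)) := by
  obtain ⟨k, hk⟩ : ∃ k, l - m = k + 1 := ⟨l - m - 1, by omega⟩
  have hk' : l - (m+1) = k := by omega
  simp only [sfxW, hk, hk', List.range_succ_eq_map, List.map_cons, List.map_map,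
    List.flatten_cons, Nat.add_zero, List.append_assoc]
  congr 4
  exact List.map_congr_left (fun i _ => by
    simp only [Function.comp_apply]
    congr 3 <;> omega)

theorem multi_pump_oneSplits {Γ M : Type*} [Monoid M]
    (φ : List Γ → M) (hφ : ∀ x y : List Γ, φ (x ++ y) = φ x * φ y)
    (l : ℕ) (α β : ℕ → List Γ)
    (h : ∀ m < l,
      φ (preW α β (fun _ => 1) m ++ β m) = φ (preW α β (fun _ => 1) m) ∧
      φ (β m ++ sfxW α β (fun _ => 1) l (m+1)) = φ (sfxW α β (fun _ => 1) l (m+1))) :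
    ∀ n : ℕ → ℕ, ∀ m < l,
      φ ((preW α β n m ++ wpow (n m) (β m)) ++ β m)
          = φ (preW α β n m ++ wpow (n m) (β m)) ∧
      φ (β m ++ sfxW α β n l (m+1)) = φ (sfxW α β n l (m+1)) := by
  intro n
  -- prefix invariance
  have A : ∀ m, m ≤ l → φ (preW α β n m) = φ (preW α β (fun _ => 1) m) := by
    intro m
    induction m with
    | zero => intro _; rfl
    | succ m ih =>
      intro hm1
      have hm : m < l := by omega
      have ihm := ih (le_of_lt hm)
      have habs : φ (preW α β n m ++ β m) = φ (preW α β n m) := by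
        calc φ (preW α β n m ++ β m) = φ (preW α β n m) * φ (β m) := hφ _ _
        _ = φ (preW α β (fun _ => 1) m) * φ (β m) := by rw [ihm]
        _ = φ (preW α β (fun _ => 1) m ++ β m) := (hφ _ _).symm
        _ = φ (preW α β (fun _ => 1) m) := (h m hm).1
        _ = φ (preW α β n m) := ihm.symm
      have h1 : φ (preW α β n m ++ wpow (n m) (β m)) = φ (preW α β n m) :=
        pump_right φ hφ habs (n m)
      have h2 : φ (preW α β (fun _ => 1) m ++ wpow 1 (β m))
          = φ (preW α β (fun _ => 1) m) :=
        pump_right φ hφ (h m hm).1 1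
      calc φ (preW α β n (m+1))
          = φ (preW α β n m ++ wpow (n m) (β m)) * φ (α (m+1)) := by
            rw [preW_succ]; exact hφ _ _
        _ = φ (preW α β (fun _ => 1) m ++ wpow 1 (β m)) * φ (α (m+1)) := by
            rw [h1, h2, ihm]
        _ = φ (preW α β (fun _ => 1) (m+1)) := by
            rw [preW_succ]; exact (hφ _ _).symm
  -- suffix invariance
  have B : ∀ k m, m + k = l → φ (sfxW α β n l m) = φ (sfxW α β (fun _ => 1) l m) := by
    intro k
    induction k with
    | zero =>
      intro m hm
      have : m = l := by omega
      subst this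
      rw [sfxW_last, sfxW_last]
    | succ k ih =>
      intro m hm
      have hm' : m < l := by omega
      have ihm := ih (m+1) (by omega)
      have habs : φ (β m ++ sfxW α β n l (m+1)) = φ (sfxW α β n l (m+1)) := by
        calc φ (β m ++ sfxW α β n l (m+1))
            = φ (β m) * φ (sfxW α β n l (m+1)) := hφ _ _
          _ = φ (β m) * φ (sfxW α β (fun _ => 1) l (m+1)) := by rw [ihm]
          _ = φ (β m ++ sfxW α β (fun _ => 1) l (m+1)) := (hφ _ _).symm
          _ = φ (sfxW α β (fun _ => 1) l (m+1)) := (h m hm').2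
          _ = φ (sfxW α β n l (m+1)) := ihm.symm
      have h1 : φ (wpow (n m) (β m) ++ sfxW α β n l (m+1)) = φ (sfxW α β n l (m+1)) :=
        pump_left φ hφ habs (n m)
      have h2 : φ (wpow 1 (β m) ++ sfxW α β (fun _ => 1) l (m+1))
          = φ (sfxW α β (fun _ => 1) l (m+1)) :=
        pump_left φ hφ (h m hm').2 1
      calc φ (sfxW α β n l m)
          = φ (α m) * φ (wpow (n m) (β m) ++ sfxW α β n l (m+1)) := by
            rw [sfxW_succ α β n hm']; exact hφ _ _
        _ = φ (α m) * φ (wpow 1 (β m) ++ sfxW α β (fun _ => 1) l (m+1)) := by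
            rw [h1, h2, ihm]
        _ = φ (sfxW α β (fun _ => 1) l m) := by
            rw [sfxW_succ α β (fun _ => 1) hm']; exact (hφ _ _).symm
  intro m hm
  have hAm := A m (le_of_lt hm)
  have habs : φ (preW α β n m ++ β m) = φ (preW α β n m) := by
    calc φ (preW α β n m ++ β m) = φ (preW α β n m) * φ (β m) := hφ _ _
      _ = φ (preW α β (fun _ => 1) m) * φ (β m) := by rw [hAm]
      _ = φ (preW α β (fun _ => 1) m ++ β m) := (hφ _ _).symm
      _ = φ (preW α β (fun _ => 1) m) := (h m hm).1
      _ = φ (preW α β n m) := hAm.symm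
  have h1 : φ (preW α β n m ++ wpow (n m) (β m)) = φ (preW α β n m) :=
    pump_right φ hφ habs (n m)
  have hBm := B (l - (m+1)) (m+1) (by omega)
  constructor
  · calc φ ((preW α β n m ++ wpow (n m) (β m)) ++ β m)
        = φ (preW α β n m ++ wpow (n m) (β m)) * φ (β m) := hφ _ _
      _ = φ (preW α β n m) * φ (β m) := by rw [h1]
      _ = φ (preW α β n m ++ β m) := (hφ _ _).symm
      _ = φ (preW α β n m) := habs
      _ = φ (preW α β n m ++ wpow (n m) (β m)) := h1.symm
  · calc φ (β m ++ sfxW α β n l (m+1))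
        = φ (β m) * φ (sfxW α β n l (m+1)) := hφ _ _
      _ = φ (β m) * φ (sfxW α β (fun _ => 1) l (m+1)) := by rw [hBm]
      _ = φ (β m ++ sfxW α β (fun _ => 1) l (m+1)) := (hφ _ _).symm
      _ = φ (sfxW α β (fun _ => 1) l (m+1)) := (h m hm).2
      _ = φ (sfxW α β n l (m+1)) := hBm.symm
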